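/- For every x in (0, π/2), cos x − (sin x / x)^3 > −x^4/15. -/

import Mathlib

open Real Set

private lemma sin_ge_poly (x : ℝ) (hx : 0 ≤ x) : x - x ^ 3 / 6 ≤ Real.sin x := by
  have h : ∀ y : ℝ, HasDerivAt (fun t => Real.sin t - (t - t ^ 3 / 6))
      (Real.cos y - (1 - y ^ 2 / 2)) y := by
    intro y
    have h2 : HasDerivAt (fun t : ℝ => t - t ^ 3 / 6) (1 - y ^ 2 / 2) y := by
      have := (hasDerivAt_id y).sub ((hasDerivAt_pow 3 y).div_const 6)
      exact this.congr_deriv (by simp; ring)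
    exact (Real.hasDerivAt_sin y).sub h2
  have mono : MonotoneOn (fun t => Real.sin t - (t - t ^ 3 / 6)) (Set.Ici 0) := by
    apply monotoneOn_of_deriv_nonneg (convex_Ici 0)
    · exact (Real.continuous_sin.sub (by continuity)).continuousOn
    · intro y _; exact (h y).differentiableAt.differentiableWithinAt
    · intro y _
      rw [(h y).deriv]
      have := Real.one_sub_sq_div_two_le_cos (x := y)
      linarith
  have := mono Set.self_mem_Ici (Set.mem_Ici.2 hx) hx
  simp only [Real.sin_zero] at this
  norm_num at this
  linarith

private lemma cos_le_poly (x : ℝ) (hx : 0 ≤ x) :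
    Real.cos x ≤ 1 - x ^ 2 / 2 + x ^ 4 / 24 := by
  have h : ∀ y : ℝ, HasDerivAt (fun t => (1 - t ^ 2 / 2 + t ^ 4 / 24) - Real.cos t)
      ((Real.sin y - (y - y ^ 3 / 6))) y := by
    intro y
    have h2 : HasDerivAt (fun t : ℝ => 1 - t ^ 2 / 2 + t ^ 4 / 24) (-(y - y ^ 3 / 6)) y := by
      have := (((hasDerivAt_const y (1:ℝ)).sub ((hasDerivAt_pow 2 y).div_const 2)).add
        ((hasDerivAt_pow 4 y).div_const 24))
      exact this.congr_deriv (by simp; ring)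
    have := h2.sub (Real.hasDerivAt_cos y)
    exact this.congr_deriv (by ring)
  have mono : MonotoneOn (fun t => (1 - t ^ 2 / 2 + t ^ 4 / 24) - Real.cos t) (Set.Ici 0) := by
    apply monotoneOn_of_deriv_nonneg (convex_Ici 0)
    · exact ((by continuity : Continuous fun t : ℝ => 1 - t ^ 2 / 2 + t ^ 4 / 24).sub
        Real.continuous_cos).continuousOn
    · intro y _; exact (h y).differentiableAt.differentiableWithinAt
    · intro y hy
      rw [(h y).deriv]
      have := sin_ge_poly y (le_of_lt (by simpa using hy))
      linarith
  have := mono Set.self_mem_Ici (Set.mem_Ici.2 hx) hx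
  simp only [Real.cos_zero] at this
  norm_num at this
  linarith

private lemma sin_le_poly (x : ℝ) (hx : 0 ≤ x) :
    Real.sin x ≤ x - x ^ 3 / 6 + x ^ 5 / 120 := by
  have h : ∀ y : ℝ, HasDerivAt (fun t => (t - t ^ 3 / 6 + t ^ 5 / 120) - Real.sin t)
      ((1 - y ^ 2 / 2 + y ^ 4 / 24) - Real.cos y) y := by
    intro y
    have h2 : HasDerivAt (fun t : ℝ => t - t ^ 3 / 6 + t ^ 5 / 120)
        (1 - y ^ 2 / 2 + y ^ 4 / 24) y := by
      have := ((hasDerivAt_id y).sub ((hasDerivAt_pow 3 y).div_const 6)).add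
        ((hasDerivAt_pow 5 y).div_const 120)
      exact this.congr_deriv (by simp; ring)
    exact h2.sub (Real.hasDerivAt_sin y)
  have mono : MonotoneOn (fun t => (t - t ^ 3 / 6 + t ^ 5 / 120) - Real.sin t) (Set.Ici 0) := by
    apply monotoneOn_of_deriv_nonneg (convex_Ici 0)
    · exact ((by continuity : Continuous fun t : ℝ => t - t ^ 3 / 6 + t ^ 5 / 120).sub
        Real.continuous_sin).continuousOn
    · intro y _; exact (h y).differentiableAt.differentiableWithinAt
    · intro y hy
      rw [(h y).deriv]
      have := cos_le_poly y (le_of_lt (by simpa using hy))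
      linarith
  have := mono Set.self_mem_Ici (Set.mem_Ici.2 hx) hx
  simp only [Real.sin_zero] at this
  norm_num at this
  linarith

private lemma cos_ge_poly (x : ℝ) (hx : 0 ≤ x) :
    1 - x ^ 2 / 2 + x ^ 4 / 24 - x ^ 6 / 720 ≤ Real.cos x := by
  have h : ∀ y : ℝ, HasDerivAt
      (fun t => Real.cos t - (1 - t ^ 2 / 2 + t ^ 4 / 24 - t ^ 6 / 720))
      ((y - y ^ 3 / 6 + y ^ 5 / 120) - Real.sin y) y := by
    intro y
    have h2 : HasDerivAt (fun t : ℝ => 1 - t ^ 2 / 2 + t ^ 4 / 24 - t ^ 6 / 720)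
        (-(y - y ^ 3 / 6 + y ^ 5 / 120)) y := by
      have := (((hasDerivAt_const y (1:ℝ)).sub ((hasDerivAt_pow 2 y).div_const 2)).add
        ((hasDerivAt_pow 4 y).div_const 24)).sub ((hasDerivAt_pow 6 y).div_const 720)
      exact this.congr_deriv (by simp; ring)
    have := (Real.hasDerivAt_cos y).sub h2
    exact this.congr_deriv (by ring)
  have mono : MonotoneOn
      (fun t => Real.cos t - (1 - t ^ 2 / 2 + t ^ 4 / 24 - t ^ 6 / 720)) (Set.Ici 0) := by
    apply monotoneOn_of_deriv_nonneg (convex_Ici 0)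
    · exact (Real.continuous_cos.sub (by continuity)).continuousOn
    · intro y _; exact (h y).differentiableAt.differentiableWithinAt
    · intro y hy
      rw [(h y).deriv]
      have := sin_le_poly y (le_of_lt (by simpa using hy))
      linarith
  have := mono Set.self_mem_Ici (Set.mem_Ici.2 hx) hx
  simp only [Real.cos_zero] at this
  norm_num at this
  linarith

theorem cos_sub_sin_div_cube_gt (x : ℝ) (hx : 0 < x) (hx2 : x < Real.pi / 2) :
    Real.cos x - (Real.sin x / x) ^ 3 > -x ^ 4 / 15 := by
  have hxle : x < 1.58 := by
    have := Real.pi_lt_d2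
    linarith
  have hspos : 0 < Real.sin x := Real.sin_pos_of_pos_of_lt_pi hx
    (by have := Real.pi_gt_three; linarith)
  have hsq : 0 < Real.sin x / x := div_pos hspos hx
  have hsle : Real.sin x / x ≤ 1 - x ^ 2 / 6 + x ^ 4 / 120 := by
    rw [div_le_iff₀ hx]
    have := sin_le_poly x hx.le
    nlinarith [this]
  have hppos : (0:ℝ) < 1 - x ^ 2 / 6 + x ^ 4 / 120 := by nlinarith [sq_nonneg x, hxle]
  have hcube : (Real.sin x / x) ^ 3 ≤ (1 - x ^ 2 / 6 + x ^ 4 / 120) ^ 3 :=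
    pow_le_pow_left₀ hsq.le hsle 3
  have hcos := cos_ge_poly x hx.le
  have hb : x ^ 2 < 2.4964 := by nlinarith
  have hq : 0 < 5 / 432 - 13 * x ^ 2 / 14400 + x ^ 4 / 28800 - x ^ 6 / 1728000 := by
    nlinarith [sq_nonneg (x ^ 2), sq_nonneg x, pow_pos hx 4, pow_pos hx 6, sq_nonneg (x ^ 3)]
  have hid : (1 - x ^ 2 / 2 + x ^ 4 / 24 - x ^ 6 / 720 + x ^ 4 / 15)
      - (1 - x ^ 2 / 6 + x ^ 4 / 120) ^ 3
      = x ^ 6 * (5 / 432 - 13 * x ^ 2 / 14400 + x ^ 4 / 28800 - x ^ 6 / 1728000) := by ring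
  nlinarith [mul_pos (pow_pos hx 6) hq, hcube, hcos]
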